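/- Assume Γ has at least one edge, at least one pair of distinct non-adjacent vertices, λ − μ − 2s > 0, and s < −1. Then P(V) is a two-distance set: the set of Euclidean distances between distinct points of P(V) is exactly {√(2·(k − λ + s² + 2s)), √(2·(k − μ + s²))}, and these two values are positive and distinct. -/

import Mathlib

open scoped RealInnerProductSpace

/-- The `i`-th column of `y = A - s·I`, where `A` is the real adjacency matrix of `G`,
viewed as a point of Euclidean space `ℝ^V`. -/
noncomputable def srgCol {V : Type*} [Fintype V] [DecidableEq V]
    (G : SimpleGraph V) [DecidableRel G.Adj] (s : ℝ) (i : V) : EuclideanSpace ℝ V :=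
  (WithLp.equiv 2 (V → ℝ)).symm fun j => (G.adjMatrix ℝ - s • (1 : Matrix V V ℝ)) j i

lemma srgCol_inner {V : Type*} [Fintype V] [DecidableEq V]
    (G : SimpleGraph V) [DecidableRel G.Adj] (s : ℝ) (i j : V) :
    ⟪srgCol G s i, srgCol G s j⟫ =
      ((G.adjMatrix ℝ - s • (1 : Matrix V V ℝ)) *
        (G.adjMatrix ℝ - s • (1 : Matrix V V ℝ))) i j := by
  have hsymm : ∀ a b : V, (G.adjMatrix ℝ - s • (1 : Matrix V V ℝ)) a b =
      (G.adjMatrix ℝ - s • (1 : Matrix V V ℝ)) b a := by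
    intro a b
    simp only [Matrix.sub_apply, Matrix.smul_apply, SimpleGraph.adjMatrix_apply,
      Matrix.one_apply]
    rw [if_congr (G.adj_comm a b) rfl rfl, if_congr (eq_comm (a := a) (b := b)) rfl rfl]
  rw [Matrix.mul_apply]
  simp only [srgCol, PiLp.inner_apply, RCLike.inner_apply, starRingEnd_apply, star_trivial,
    WithLp.equiv_symm_apply, PiLp.toLp_apply]
  exact Finset.sum_congr rfl fun x _ => by rw [hsymm x i, mul_comm]

lemma srgCol_mul_entry {V : Type*} [Fintype V] [DecidableEq V]
    (G : SimpleGraph V) [DecidableRel G.Adj] {v k l m : ℕ}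
    (hG : G.IsSRGWith v k l m) (s : ℝ) (i j : V) :
    ((G.adjMatrix ℝ - s • (1 : Matrix V V ℝ)) *
        (G.adjMatrix ℝ - s • (1 : Matrix V V ℝ))) i j =
      if i = j then (k : ℝ) + s ^ 2
      else if G.Adj i j then (l : ℝ) - 2 * s else (m : ℝ) := by
  have hA2 : (G.adjMatrix ℝ * G.adjMatrix ℝ) i j =
      (k : ℝ) * (1 : Matrix V V ℝ) i j + (l : ℝ) * (G.adjMatrix ℝ) i j
        + (m : ℝ) * (Gᶜ.adjMatrix ℝ) i j := by
    have h := congrFun (congrFun (hG.matrix_eq (α := ℝ)) i) j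
    rw [sq] at h
    rw [show k • (1 : Matrix V V ℝ) = (k : ℝ) • 1 from (Nat.cast_smul_eq_nsmul ℝ k _).symm,
      show l • G.adjMatrix ℝ = (l : ℝ) • G.adjMatrix ℝ from (Nat.cast_smul_eq_nsmul ℝ l _).symm,
      show m • Gᶜ.adjMatrix ℝ = (m : ℝ) • Gᶜ.adjMatrix ℝ from
        (Nat.cast_smul_eq_nsmul ℝ m _).symm] at h
    simpa [Matrix.add_apply, Matrix.smul_apply, smul_eq_mul] using h
  have hexp : ((G.adjMatrix ℝ - s • (1 : Matrix V V ℝ)) *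
        (G.adjMatrix ℝ - s • (1 : Matrix V V ℝ))) i j =
      (G.adjMatrix ℝ * G.adjMatrix ℝ) i j - 2 * s * (G.adjMatrix ℝ) i j
        + s ^ 2 * (1 : Matrix V V ℝ) i j := by
    rw [sub_mul, mul_sub, mul_sub]
    simp only [Matrix.mul_smul, Matrix.smul_mul, Matrix.one_mul, Matrix.mul_one, smul_smul,
      Matrix.sub_apply, Matrix.smul_apply, smul_eq_mul]
    ring
  rw [hexp, hA2]
  by_cases hij : i = j
  · subst hij
    simp [Matrix.one_apply, SimpleGraph.adjMatrix_apply]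
  · by_cases ha : G.Adj i j
    · have hc : ¬ Gᶜ.Adj i j := by simp [SimpleGraph.compl_adj, ha]
      simp only [Matrix.one_apply, if_neg hij, SimpleGraph.adjMatrix_apply, if_pos ha,
        if_neg hc]
      ring
    · have hc : Gᶜ.Adj i j := by simp [SimpleGraph.compl_adj, hij, ha]
      simp [Matrix.one_apply, hij, ha, hc, SimpleGraph.adjMatrix_apply]

lemma srgCol_dist_sq {V : Type*} [Fintype V] [DecidableEq V]
    (G : SimpleGraph V) [DecidableRel G.Adj] {v k l m : ℕ}
    (hG : G.IsSRGWith v k l m) (s : ℝ) {i j : V} (hij : i ≠ j) :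
    dist (srgCol G s i) (srgCol G s j) ^ 2 =
      if G.Adj i j then 2 * ((k : ℝ) - l + s ^ 2 + 2 * s)
      else 2 * ((k : ℝ) - m + s ^ 2) := by
  rw [dist_eq_norm, norm_sub_sq_real, ← real_inner_self_eq_norm_sq,
    ← real_inner_self_eq_norm_sq]
  rw [srgCol_inner, srgCol_inner, srgCol_inner, srgCol_mul_entry G hG,
    srgCol_mul_entry G hG, srgCol_mul_entry G hG]
  simp only [if_pos rfl, if_neg hij]
  by_cases ha : G.Adj i j <;> simp [ha] <;> ring

theorem stmt_17 {V : Type*} [Fintype V] [DecidableEq V]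
    (G : SimpleGraph V) [DecidableRel G.Adj] (v k l m : ℕ)
    (hG : G.IsSRGWith v k l m)
    (hedge : ∃ i j : V, G.Adj i j)
    (hnonadj : ∃ i j : V, i ≠ j ∧ ¬G.Adj i j)
    (s : ℝ) (hsl : (l : ℝ) - m - 2 * s > 0) (hs : s < -1) :
    {d : ℝ | ∃ i j : V, i ≠ j ∧ d = dist (srgCol G s i) (srgCol G s j)} =
      {Real.sqrt (2 * ((k : ℝ) - l + s ^ 2 + 2 * s)),
        Real.sqrt (2 * ((k : ℝ) - m + s ^ 2))} ∧
    0 < Real.sqrt (2 * ((k : ℝ) - l + s ^ 2 + 2 * s)) ∧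
    0 < Real.sqrt (2 * ((k : ℝ) - m + s ^ 2)) ∧
    Real.sqrt (2 * ((k : ℝ) - l + s ^ 2 + 2 * s)) ≠
      Real.sqrt (2 * ((k : ℝ) - m + s ^ 2)) := by
  obtain ⟨a, b, hab⟩ := hedge
  obtain ⟨c, d, hcd, hcdn⟩ := hnonadj
  -- l < k
  have hlk : l < k := by
    have := hab.card_commonNeighbors_lt_degree
    rwa [hG.of_adj a b hab, hG.regular a] at this
  have h1 : (0:ℝ) < 2 * ((k : ℝ) - l + s ^ 2 + 2 * s) := by
    have hlk' : (1:ℝ) ≤ (k:ℝ) - l := by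
      have : (l:ℝ) + 1 ≤ k := by exact_mod_cast hlk
      linarith
    nlinarith [sq_nonneg (s + 1)]
  have h2 : (0:ℝ) < 2 * ((k : ℝ) - m + s ^ 2) := by linarith
  have hlt : 2 * ((k : ℝ) - l + s ^ 2 + 2 * s) < 2 * ((k : ℝ) - m + s ^ 2) := by
    linarith
  have key : ∀ i j : V, i ≠ j → dist (srgCol G s i) (srgCol G s j) =
      if G.Adj i j then Real.sqrt (2 * ((k : ℝ) - l + s ^ 2 + 2 * s))
      else Real.sqrt (2 * ((k : ℝ) - m + s ^ 2)) := by
    intro i j hij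
    have hd := srgCol_dist_sq G hG s hij
    have : dist (srgCol G s i) (srgCol G s j) =
        Real.sqrt (dist (srgCol G s i) (srgCol G s j) ^ 2) :=
      (Real.sqrt_sq dist_nonneg).symm
    rw [this, hd]
    by_cases ha : G.Adj i j <;> simp [ha]
  refine ⟨?_, Real.sqrt_pos.2 h1, Real.sqrt_pos.2 h2, ?_⟩
  · ext x
    simp only [Set.mem_setOf_eq, Set.mem_insert_iff, Set.mem_singleton_iff]
    constructor
    · rintro ⟨i, j, hij, rfl⟩
      rw [key i j hij]
      by_cases ha : G.Adj i j <;> simp [ha]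
    · rintro (rfl | rfl)
      · exact ⟨a, b, hab.ne, by rw [key a b hab.ne]; simp [hab]⟩
      · exact ⟨c, d, hcd, by rw [key c d hcd]; simp [hcdn]⟩
  · exact ne_of_lt (Real.sqrt_lt_sqrt h1.le hlt)
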